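/- Let R be a ring in which 3 is nilpotent. Then the following are equivalent: (1) R is strongly 2-nil-clean; (2) for every a ∈ R there exist idempotents e, f ∈ R and a nilpotent w ∈ R, commuting with each other, such that a = e - f + w; (3) for every a ∈ R there exist idempotents e, f ∈ R and a nilpotent w ∈ R, commuting with each other, such that a = -e - f + w. -/

import Mathlib

/-- A ring is weakly strongly 2-nil-clean if every element is `±e ± f + n` with
`e, f` idempotents and `n` nilpotent, all commuting with each other. -/
def IsWeaklyStrongly2NilClean (R : Type*) [Ring R] : Prop :=
  ∀ a : R, ∃ e f n : R, IsIdempotentElem e ∧ IsIdempotentElem f ∧ IsNilpotent n ∧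
    Commute e f ∧ Commute e n ∧ Commute f n ∧
    (a = e + f + n ∨ a = e - f + n ∨ a = -e + f + n ∨ a = -e - f + n)

/-- A ring is strongly 2-nil-clean if every element is `e + f + n` with
`e, f` idempotents and `n` nilpotent, all commuting with each other. -/
def IsStrongly2NilClean (R : Type*) [Ring R] : Prop :=
  ∀ a : R, ∃ e f n : R, IsIdempotentElem e ∧ IsIdempotentElem f ∧ IsNilpotent n ∧
    Commute e f ∧ Commute e n ∧ Commute f n ∧ a = e + f + n

section CommLemmas

variable {S : Type*} [CommRing S]

private lemma lift_aux : ∀ (k : ℕ) (x : S), (x ^ 2 - x) ^ (2 ^ k) = 0 →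
    ∃ e : S, IsIdempotentElem e ∧ IsNilpotent (x - e) := by
  intro k
  induction k with
  | zero =>
    intro x hx
    have h0 : x ^ 2 - x = 0 := by simpa using hx
    exact ⟨x, by unfold IsIdempotentElem; linear_combination h0, by simp⟩
  | succ k ih =>
    intro x hx
    have hxn : IsNilpotent (x ^ 2 - x) := ⟨2 ^ (k + 1), hx⟩
    set y : S := 3 * x ^ 2 - 2 * x ^ 3 with hy
    have key : y ^ 2 - y = (x ^ 2 - x) ^ 2 * (4 * x ^ 2 - 4 * x - 3) := by
      rw [hy]; ring
    have h2 : (y ^ 2 - y) ^ (2 ^ k) = 0 := by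
      rw [key, mul_pow, ← pow_mul]
      have h22 : 2 * 2 ^ k = 2 ^ (k + 1) := (pow_succ' 2 k).symm
      rw [h22, hx, zero_mul]
    obtain ⟨e, he, hne⟩ := ih y h2
    have hxy : IsNilpotent (x - y) := by
      have hxy' : x - y = (x ^ 2 - x) * (2 * x - 1) := by rw [hy]; ring
      rw [hxy']
      exact (Commute.all _ _).isNilpotent_mul_right hxn
    refine ⟨e, he, ?_⟩
    have := (Commute.all _ _).isNilpotent_add hxy hne
    rwa [sub_add_sub_cancel] at this

private lemma lift_idem (x : S) (h : IsNilpotent (x ^ 2 - x)) :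
    ∃ e : S, IsIdempotentElem e ∧ IsNilpotent (x - e) := by
  obtain ⟨m, hm⟩ := h
  exact lift_aux m x (pow_eq_zero_of_le m.lt_two_pow_self.le hm)

private lemma cube_add (h3 : IsNilpotent (3 : S)) {e f n : S} (he : IsIdempotentElem e)
    (hf : IsIdempotentElem f) (hn : IsNilpotent n) :
    IsNilpotent ((e + f + n) - (e + f + n) ^ 3) := by
  have he' : e * e = e := he
  have hf' : f * f = f := hf
  have key : (e + f + n) - (e + f + n) ^ 3
      = 3 * (-(2 * e * f) - n * ((e + f) ^ 2 + (e + f) * n)) + n * (1 - n ^ 2) := by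
    linear_combination (-(1 + 3 * f + e)) * he' + (-(1 + f + 3 * e)) * hf'
  rw [key]
  exact (Commute.all _ _).isNilpotent_add
    ((Commute.all _ _).isNilpotent_mul_right h3)
    ((Commute.all _ _).isNilpotent_mul_right hn)

private lemma cube_sub {e f n : S} (he : IsIdempotentElem e)
    (hf : IsIdempotentElem f) (hn : IsNilpotent n) :
    IsNilpotent ((e - f + n) - (e - f + n) ^ 3) := by
  have he' : e * e = e := he
  have hf' : f * f = f := hf
  have key : (e - f + n) - (e - f + n) ^ 3
      = n * (1 - 3 * (e - f) ^ 2 - 3 * (e - f) * n - n ^ 2) := by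
    linear_combination (-1 + 3 * f - e) * he' + (1 + f - 3 * e) * hf'
  rw [key]
  exact (Commute.all _ _).isNilpotent_mul_right hn

private lemma decomp_add (h3 : IsNilpotent (3 : S)) (x : S) (hx : IsNilpotent (x - x ^ 3)) :
    ∃ e f n : S, IsIdempotentElem e ∧ IsIdempotentElem f ∧ IsNilpotent n ∧
      x = e + f + n := by
  have h1 : IsNilpotent ((x ^ 2) ^ 2 - x ^ 2) := by
    have h1' : (x ^ 2) ^ 2 - x ^ 2 = (-x) * (x - x ^ 3) := by ring
    rw [h1']
    exact (Commute.all _ _).isNilpotent_mul_left hx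
  have h2 : IsNilpotent ((x - x ^ 2) ^ 2 - (x - x ^ 2)) := by
    have h2' : (x - x ^ 2) ^ 2 - (x - x ^ 2) = (2 - x) * (x - x ^ 3) + 3 * (x ^ 2 - x) := by
      ring
    rw [h2']
    exact (Commute.all _ _).isNilpotent_add
      ((Commute.all _ _).isNilpotent_mul_left hx)
      ((Commute.all _ _).isNilpotent_mul_right h3)
  obtain ⟨e, he, hne⟩ := lift_idem (x ^ 2) h1
  obtain ⟨f, hf, hnf⟩ := lift_idem (x - x ^ 2) h2
  refine ⟨e, f, x - e - f, he, hf, ?_, by ring⟩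
  have hsum : x - e - f = (x ^ 2 - e) + ((x - x ^ 2) - f) := by ring
  rw [hsum]
  exact (Commute.all _ _).isNilpotent_add hne hnf

private lemma decomp_sub (h3 : IsNilpotent (3 : S)) (x : S) (hx : IsNilpotent (x - x ^ 3)) :
    ∃ e f w : S, IsIdempotentElem e ∧ IsIdempotentElem f ∧ IsNilpotent w ∧
      x = e - f + w := by
  have h1 : IsNilpotent ((-(x ^ 2 + x)) ^ 2 - (-(x ^ 2 + x))) := by
    have h1' : (-(x ^ 2 + x)) ^ 2 - (-(x ^ 2 + x))
        = (-(x + 2)) * (x - x ^ 3) + 3 * (x ^ 2 + x) := by ring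
    rw [h1']
    exact (Commute.all _ _).isNilpotent_add
      ((Commute.all _ _).isNilpotent_mul_left hx)
      ((Commute.all _ _).isNilpotent_mul_right h3)
  have h2 : IsNilpotent ((x - x ^ 2) ^ 2 - (x - x ^ 2)) := by
    have h2' : (x - x ^ 2) ^ 2 - (x - x ^ 2) = (2 - x) * (x - x ^ 3) + 3 * (x ^ 2 - x) := by
      ring
    rw [h2']
    exact (Commute.all _ _).isNilpotent_add
      ((Commute.all _ _).isNilpotent_mul_left hx)
      ((Commute.all _ _).isNilpotent_mul_right h3)
  obtain ⟨e, he, hne⟩ := lift_idem (-(x ^ 2 + x)) h1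
  obtain ⟨f, hf, hnf⟩ := lift_idem (x - x ^ 2) h2
  refine ⟨e, f, x - e + f, he, hf, ?_, by ring⟩
  have hsum : x - e + f = (3 * x + ((-(x ^ 2 + x)) - e)) + (-((x - x ^ 2) - f)) := by ring
  rw [hsum]
  exact (Commute.all _ _).isNilpotent_add
    ((Commute.all _ _).isNilpotent_add ((Commute.all _ _).isNilpotent_mul_right h3) hne)
    hnf.neg

end CommLemmas

section Bridge

variable {R : Type*} [Ring R]

private lemma nilpotent_sub_cube_of (h3 : IsNilpotent (3 : R)) {a e f n : R}
    (he : IsIdempotentElem e) (hf : IsIdempotentElem f) (hn : IsNilpotent n)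
    (hef : Commute e f) (hen : Commute e n) (hfn : Commute f n)
    (hsplit : a = e + f + n ∨ a = e - f + n) :
    IsNilpotent (a - a ^ 3) := by
  have hcomm : ∀ x ∈ ({e, f, n} : Set R), ∀ y ∈ ({e, f, n} : Set R), x * y = y * x := by
    rintro x (rfl | rfl | rfl) y (rfl | rfl | rfl)
    · rfl
    · exact hef
    · exact hen
    · exact hef.symm
    · rfl
    · exact hfn
    · exact hen.symm
    · exact hfn.symm
    · rfl
  letI : CommRing (Subring.closure ({e, f, n} : Set R)) := Subring.closureCommRingOfComm hcomm
  have heT : e ∈ Subring.closure ({e, f, n} : Set R) := Subring.subset_closure (by simp)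
  have hfT : f ∈ Subring.closure ({e, f, n} : Set R) := Subring.subset_closure (by simp)
  have hnT : n ∈ Subring.closure ({e, f, n} : Set R) := Subring.subset_closure (by simp)
  have hE : IsIdempotentElem (⟨e, heT⟩ : Subring.closure ({e, f, n} : Set R)) :=
    Subtype.ext (show e * e = e from he)
  have hF : IsIdempotentElem (⟨f, hfT⟩ : Subring.closure ({e, f, n} : Set R)) :=
    Subtype.ext (show f * f = f from hf)
  obtain ⟨k, hk⟩ := hn
  have hN : IsNilpotent (⟨n, hnT⟩ : Subring.closure ({e, f, n} : Set R)) :=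
    ⟨k, Subtype.ext (show n ^ k = 0 from hk)⟩
  obtain ⟨m, hm⟩ := h3
  have h3T : IsNilpotent (3 : Subring.closure ({e, f, n} : Set R)) :=
    ⟨m, Subtype.ext (show (3 : R) ^ m = 0 from hm)⟩
  rcases hsplit with rfl | rfl
  · obtain ⟨j, hj⟩ := cube_add h3T hE hF hN
    exact ⟨j, show ((((⟨e, heT⟩ + ⟨f, hfT⟩ + ⟨n, hnT⟩)
      - (⟨e, heT⟩ + ⟨f, hfT⟩ + ⟨n, hnT⟩) ^ 3 : Subring.closure ({e, f, n} : Set R)) ^ j : _) : R)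
      = ((0 : Subring.closure ({e, f, n} : Set R)) : R) from congrArg _ hj⟩
  · obtain ⟨j, hj⟩ := cube_sub hE hF hN
    exact ⟨j, show ((((⟨e, heT⟩ - ⟨f, hfT⟩ + ⟨n, hnT⟩)
      - (⟨e, heT⟩ - ⟨f, hfT⟩ + ⟨n, hnT⟩) ^ 3 : Subring.closure ({e, f, n} : Set R)) ^ j : _) : R)
      = ((0 : Subring.closure ({e, f, n} : Set R)) : R) from congrArg _ hj⟩

private lemma decomp_of_nilpotent_sub_cube (h3 : IsNilpotent (3 : R)) {a : R}
    (ha : IsNilpotent (a - a ^ 3)) :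
    (∃ e f n : R, IsIdempotentElem e ∧ IsIdempotentElem f ∧ IsNilpotent n ∧
      Commute e f ∧ Commute e n ∧ Commute f n ∧ a = e + f + n) ∧
    (∃ e f w : R, IsIdempotentElem e ∧ IsIdempotentElem f ∧ IsNilpotent w ∧
      Commute e f ∧ Commute e w ∧ Commute f w ∧ a = e - f + w) := by
  have hcomm : ∀ x ∈ ({a} : Set R), ∀ y ∈ ({a} : Set R), x * y = y * x := by
    rintro x rfl y rfl; rfl
  letI : CommRing (Subring.closure ({a} : Set R)) := Subring.closureCommRingOfComm hcomm
  have haT : a ∈ Subring.closure ({a} : Set R) := Subring.subset_closure (by simp)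
  obtain ⟨k, hk⟩ := ha
  have hX : IsNilpotent ((⟨a, haT⟩ : Subring.closure ({a} : Set R))
      - (⟨a, haT⟩ : Subring.closure ({a} : Set R)) ^ 3) :=
    ⟨k, Subtype.ext (show (a - a ^ 3) ^ k = 0 from hk)⟩
  obtain ⟨m, hm⟩ := h3
  have h3T : IsNilpotent (3 : Subring.closure ({a} : Set R)) :=
    ⟨m, Subtype.ext (show (3 : R) ^ m = 0 from hm)⟩
  have commT : ∀ u v : Subring.closure ({a} : Set R), Commute (u : R) (v : R) := by
    intro u v
    exact congrArg Subtype.val (mul_comm u v)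
  have nilT : ∀ u : Subring.closure ({a} : Set R), IsNilpotent u → IsNilpotent (u : R) := by
    rintro u ⟨j, hj⟩
    exact ⟨j, show ((u ^ j : _) : R) = ((0 : Subring.closure ({a} : Set R)) : R)
      from congrArg _ hj⟩
  constructor
  · obtain ⟨E, F, N, hE, hF, hN, hsum⟩ := decomp_add h3T _ hX
    refine ⟨E, F, N, congrArg Subtype.val hE, congrArg Subtype.val hF,
      nilT N hN, commT E F, commT E N, commT F N, ?_⟩
    exact congrArg Subtype.val hsum
  · obtain ⟨E, F, W, hE, hF, hW, hsum⟩ := decomp_sub h3T _ hX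
    refine ⟨E, F, W, congrArg Subtype.val hE, congrArg Subtype.val hF,
      nilT W hW, commT E F, commT E W, commT F W, ?_⟩
    exact congrArg Subtype.val hsum

end Bridge

theorem strongly2NilClean_tfae_of_three_nilpotent {R : Type*} [Ring R]
    (h3 : IsNilpotent (3 : R)) :
    (IsStrongly2NilClean R ↔
      ∀ a : R, ∃ e f w : R, IsIdempotentElem e ∧ IsIdempotentElem f ∧ IsNilpotent w ∧
        Commute e f ∧ Commute e w ∧ Commute f w ∧ a = e - f + w) ∧
    (IsStrongly2NilClean R ↔
      ∀ a : R, ∃ e f w : R, IsIdempotentElem e ∧ IsIdempotentElem f ∧ IsNilpotent w ∧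
        Commute e f ∧ Commute e w ∧ Commute f w ∧ a = -e - f + w) := by
  constructor
  · constructor
    · intro hS a
      obtain ⟨e, f, n, he, hf, hn, hef, hen, hfn, hsum⟩ := hS a
      have := nilpotent_sub_cube_of h3 he hf hn hef hen hfn (Or.inl hsum)
      exact (decomp_of_nilpotent_sub_cube h3 this).2
    · intro h a
      obtain ⟨e, f, w, he, hf, hw, hef, hew, hfw, hsum⟩ := h a
      have := nilpotent_sub_cube_of h3 he hf hw hef hew hfw (Or.inr hsum)
      exact (decomp_of_nilpotent_sub_cube h3 this).1
  · constructor
    · intro hS a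
      obtain ⟨e, f, n, he, hf, hn, hef, hen, hfn, hsum⟩ := hS (-a)
      exact ⟨e, f, -n, he, hf, hn.neg, hef, hen.neg_right, hfn.neg_right,
        by rw [show a = -(-a) from (neg_neg a).symm, hsum]; abel⟩
    · intro h a
      obtain ⟨e, f, w, he, hf, hw, hef, hew, hfw, hsum⟩ := h (-a)
      refine ⟨e, f, -w, he, hf, hw.neg, hef, hew.neg_right, hfw.neg_right, ?_⟩
      rw [show a = -(-a) from (neg_neg a).symm, hsum]; abel
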